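/- Let T_i = T(ℓ_i, s_i) and T_j = T(ℓ_j, s_j) with delay indices ℓ_i, ℓ_j ∈ {0,…,M−1} and real Doppler exponents s_i, s_j (of the form k+κ with k ∈ {0,…,N−1}, κ ∈ (−1/2,1/2)). Then for every row index r ∈ {0,…,MN−1}, the squared modulus of the full row sum equals one: |∑_{r'=0}^{MN−1} [T_i T_j^†]_{(r,r')}|² = 1 (Lemma 3). -/

import Mathlib

open Matrix

noncomputable section

/-- Entry of the `N`-point unitary DFT matrix, written with natural-number indices:
`(F_N)_{a,b} = (1/√N) exp(-2πi a b / N)`. -/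
def dftEntry (N a b : ℕ) : ℂ :=
  (((Real.sqrt N)⁻¹ : ℝ) : ℂ) *
    Complex.exp (-(2 * Real.pi * Complex.I) * (a : ℂ) * (b : ℂ) / (N : ℂ))

/-- The Kronecker product `F_N ⊗ I_M`, realised on `Fin (M*N)` via the
correspondence `u ↔ (u / M, u % M)` (index `u` encodes the pair
`(a,b) = (u / M, u % M)` as `u = a·M + b`). -/
def FkronI (M N : ℕ) : Matrix (Fin (M * N)) (Fin (M * N)) ℂ :=
  Matrix.of fun u v =>
    if (u : ℕ) % M = (v : ℕ) % M then dftEntry N ((u : ℕ) / M) ((v : ℕ) / M) else 0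

/-- The cyclic-shift permutation matrix `Π` of size `K`:
`Π_{u,v} = 1` iff `u ≡ v + 1 (mod K)`. -/
def cyclicShift (K : ℕ) : Matrix (Fin K) (Fin K) ℂ :=
  Matrix.of fun u v => if ((v : ℕ) + 1) % K = (u : ℕ) then 1 else 0

/-- The diagonal matrix `Δ^s` of size `K`, with `(Δ^s)_{j,j} = exp(2πi s j / K)`. -/
def deltaPow (K : ℕ) (s : ℝ) : Matrix (Fin K) (Fin K) ℂ :=
  Matrix.diagonal fun j => Complex.exp (2 * Real.pi * Complex.I * (s : ℂ) * ((j : ℕ) : ℂ) / (K : ℂ))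

/-- The OTFS delay–Doppler matrix `T(ℓ,s) = (F_N ⊗ I_M) Π^ℓ Δ^s (F_N^† ⊗ I_M)`. -/
def Tmat (M N : ℕ) (ℓ : ℕ) (s : ℝ) : Matrix (Fin (M * N)) (Fin (M * N)) ℂ :=
  FkronI M N * (cyclicShift (M * N)) ^ ℓ * deltaPow (M * N) s * (FkronI M N)ᴴ

/-! ### Auxiliary lemmas -/

open Complex in
lemma sum_exp_int (n : ℕ) (hn : 0 < n) (m : ℤ) :
    ∑ a : Fin n, Complex.exp (2 * Real.pi * I * m * a / n) = if (n:ℤ) ∣ m then n else 0 := by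
  have hζ : ∀ a : Fin n, Complex.exp (2 * Real.pi * I * m * a / n)
      = Complex.exp (2 * Real.pi * I * m / n) ^ (a:ℕ) := by
    intro a
    rw [← Complex.exp_nat_mul]
    ring_nf
  simp only [hζ]
  rw [Fin.sum_univ_eq_sum_range (fun i => Complex.exp (2 * Real.pi * I * m / n) ^ i)]
  set ζ := Complex.exp (2 * Real.pi * I * m / n) with hζdef
  have hn' : (n:ℂ) ≠ 0 := Nat.cast_ne_zero.mpr hn.ne'
  have hone : ζ = 1 ↔ (n:ℤ) ∣ m := by
    rw [hζdef, Complex.exp_eq_one_iff]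
    constructor
    · rintro ⟨t, ht⟩
      refine ⟨t, ?_⟩
      have h2 : (2:ℂ) * Real.pi * I ≠ 0 := by
        simp [Real.pi_ne_zero, Complex.I_ne_zero]
      have hc : (m:ℂ) = n * t := by
        field_simp at ht
        refine mul_left_cancel₀ h2 ?_
        linear_combination (2 * (Real.pi:ℂ) * I) * ht
      exact_mod_cast hc
    · rintro ⟨t, rfl⟩
      exact ⟨t, by push_cast; field_simp⟩
  by_cases h : (n:ℤ) ∣ m
  · simp [h, hone.mpr h]
  · rw [if_neg h]
    have hζ1 : ζ ≠ 1 := fun hc => h (hone.mp hc)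
    rw [geom_sum_eq hζ1]
    have hζn : ζ ^ n = 1 := by
      rw [hζdef, ← Complex.exp_nat_mul, Complex.exp_eq_one_iff]
      exact ⟨m, by field_simp⟩
    simp [hζn]

open Complex

lemma sqrtN_mul (N : ℕ) (hN : 0 < N) :
    (((Real.sqrt N)⁻¹ : ℝ) : ℂ) * (N : ℂ) = ((Real.sqrt N : ℝ) : ℂ) := by
  have h0 : (0:ℝ) ≤ (N:ℝ) := by positivity
  have h : ((N:ℝ)) = Real.sqrt N * Real.sqrt N := (Real.mul_self_sqrt h0).symm
  have hs : Real.sqrt N ≠ 0 := by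
    refine Real.sqrt_ne_zero'.mpr ?_
    exact_mod_cast hN
  have : ((Real.sqrt N)⁻¹ : ℝ) * (N:ℝ) = Real.sqrt N := by
    rw [inv_mul_eq_iff_eq_mul₀ hs]; exact h
  calc (((Real.sqrt N)⁻¹ : ℝ) : ℂ) * (N : ℂ)
      = ((((Real.sqrt N)⁻¹ : ℝ) * (N:ℝ) : ℝ) : ℂ) := by push_cast; ring
    _ = _ := by rw [this]

lemma dft_colsum (N : ℕ) (hN : 0 < N) (b : ℕ) (hb : b < N) :
    ∑ a : Fin N, dftEntry N a b = if b = 0 then ((Real.sqrt N : ℝ) : ℂ) else 0 := by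
  have hterm : ∀ a : Fin N, dftEntry N a b
      = (((Real.sqrt N)⁻¹ : ℝ) : ℂ) * Complex.exp (2 * Real.pi * I * ((-(b:ℤ) : ℤ) : ℂ) * a / N) := by
    intro a
    unfold dftEntry
    congr 1
    congr 1
    push_cast
    ring
  simp only [hterm]
  rw [← Finset.mul_sum, sum_exp_int N hN (-(b:ℤ))]
  have hdvd : (N:ℤ) ∣ (-(b:ℤ)) ↔ b = 0 := by
    rw [Int.dvd_neg, Int.natCast_dvd_natCast]
    constructor
    · intro h; exact Nat.eq_zero_of_dvd_of_lt h hb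
    · rintro rfl; exact dvd_zero _
  by_cases h : b = 0
  · rw [if_pos (hdvd.mpr h), if_pos h, sqrtN_mul N hN]
  · rw [if_neg (fun hc => h (hdvd.mp hc)), if_neg h]; simp

lemma conj_dftEntry (N a b : ℕ) : (starRingEnd ℂ) (dftEntry N a b)
    = (((Real.sqrt N)⁻¹ : ℝ) : ℂ) * Complex.exp ((2 * Real.pi * Complex.I) * (a : ℂ) * (b : ℂ) / (N : ℂ)) := by
  unfold dftEntry
  rw [_root_.map_mul, ← Complex.exp_conj]
  congr 1
  · exact Complex.conj_ofReal _
  · congr 1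
    simp [map_div₀, Complex.conj_I, map_ofNat]

lemma dft_ortho (N : ℕ) (hN : 0 < N) (b b' : ℕ) (hb : b < N) (hb' : b' < N) :
    ∑ a : Fin N, dftEntry N a b * (starRingEnd ℂ) (dftEntry N a b') = if b = b' then 1 else 0 := by
  have hterm : ∀ a : Fin N, dftEntry N a b * (starRingEnd ℂ) (dftEntry N a b')
      = (((Real.sqrt N)⁻¹ : ℝ) : ℂ)^2 * Complex.exp (2 * Real.pi * I * (((b':ℤ) - b : ℤ) : ℂ) * a / N) := by
    intro a
    rw [conj_dftEntry]
    unfold dftEntry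
    rw [mul_mul_mul_comm, ← Complex.exp_add]
    congr 1
    · ring
    · congr 1
      push_cast
      have hN' : (N:ℂ) ≠ 0 := Nat.cast_ne_zero.mpr hN.ne'
      field_simp
      ring
  simp only [hterm]
  rw [← Finset.mul_sum, sum_exp_int N hN ((b':ℤ) - b)]
  have hdvd : (N:ℤ) ∣ ((b':ℤ) - b) ↔ b = b' := by
    constructor
    · intro h
      have := Int.eq_zero_of_abs_lt_dvd h (by
        rw [abs_sub_lt_iff]; constructor <;> [skip; skip] <;> push_cast <;> omega)
      omega
    · rintro rfl; simp
  by_cases h : b = b'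
  · rw [if_pos (hdvd.mpr h), if_pos h]
    have hs : Real.sqrt N ≠ 0 := by
      refine Real.sqrt_ne_zero'.mpr ?_
      exact_mod_cast hN
    have hNe : ((N:ℝ)) = Real.sqrt N * Real.sqrt N := (Real.mul_self_sqrt (by positivity)).symm
    have : (((Real.sqrt N)⁻¹:ℝ):ℂ)^2 * (N:ℂ) = 1 := by
      have : ((Real.sqrt N)⁻¹:ℝ)^2 * (N:ℝ) = 1 := by
        rw [inv_pow, inv_mul_eq_one₀ (pow_ne_zero 2 hs), sq]; exact hNe.symm
      calc (((Real.sqrt N)⁻¹:ℝ):ℂ)^2 * (N:ℂ) = ((((Real.sqrt N)⁻¹:ℝ)^2 * (N:ℝ) : ℝ) : ℂ) := by push_cast; ring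
        _ = 1 := by rw [this]; norm_num
    exact this
  · rw [if_neg (fun hc => h (hdvd.mp hc)), if_neg h]; simp

/-- The pairing equivalence `(a,b) ↦ a + M*b` between `Fin M × Fin N` and `Fin (M*N)`. -/
def pairEquiv (M N : ℕ) : Fin M × Fin N ≃ Fin (M * N) where
  toFun p := ⟨(p.1 : ℕ) + M * (p.2 : ℕ), by
    have h1 := p.1.isLt; have h2 := p.2.isLt
    have hM : 0 < M := lt_of_le_of_lt (Nat.zero_le _) h1
    calc (p.1 : ℕ) + M * (p.2 : ℕ) < M + M * (p.2:ℕ) := by omega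
      _ = M * ((p.2:ℕ) + 1) := by ring
      _ ≤ M * N := Nat.mul_le_mul_left M (by omega)⟩
  invFun u := ⟨⟨(u:ℕ) % M, by
      have hu := u.isLt
      have hK : 0 < M * N := lt_of_le_of_lt (Nat.zero_le _) hu
      have hM : 0 < M := by
        rcases Nat.eq_zero_or_pos M with h|h
        · exfalso; rw [h, zero_mul] at hK; exact lt_irrefl 0 hK
        · exact h
      exact Nat.mod_lt _ hM⟩,
    ⟨(u:ℕ) / M, by
      have hu := u.isLt
      exact Nat.div_lt_of_lt_mul (by omega)⟩⟩
  left_inv p := by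
    have h1 := p.1.isLt
    have hM : 0 < M := lt_of_le_of_lt (Nat.zero_le _) h1
    have hmod : ((p.1 : ℕ) + M * (p.2 : ℕ)) % M = (p.1:ℕ) := by
      rw [Nat.add_mul_mod_self_left, Nat.mod_eq_of_lt h1]
    have hdiv : ((p.1 : ℕ) + M * (p.2 : ℕ)) / M = (p.2:ℕ) := by
      rw [Nat.add_mul_div_left _ _ hM, Nat.div_eq_of_lt h1, zero_add]
    ext
    · exact hmod
    · exact hdiv
  right_inv u := by
    ext
    exact Nat.mod_add_div _ _

lemma pairEquiv_mod (M N : ℕ) (p : Fin M × Fin N) :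
    ((pairEquiv M N p : Fin (M*N)) : ℕ) % M = (p.1 : ℕ) := by
  have h1 := p.1.isLt
  show ((p.1 : ℕ) + M * (p.2 : ℕ)) % M = (p.1:ℕ)
  rw [Nat.add_mul_mod_self_left, Nat.mod_eq_of_lt h1]

lemma pairEquiv_div (M N : ℕ) (p : Fin M × Fin N) :
    ((pairEquiv M N p : Fin (M*N)) : ℕ) / M = (p.2 : ℕ) := by
  have h1 := p.1.isLt
  have hM : 0 < M := lt_of_le_of_lt (Nat.zero_le _) h1
  show ((p.1 : ℕ) + M * (p.2 : ℕ)) / M = (p.2:ℕ)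
  rw [Nat.add_mul_div_left _ _ hM, Nat.div_eq_of_lt h1, zero_add]

lemma FkronI_colsum (M N : ℕ) (hM : 0 < M) (hN : 0 < N) (w : Fin (M*N)) :
    ∑ r' : Fin (M*N), FkronI M N r' w = if (w:ℕ) < M then ((Real.sqrt N : ℝ) : ℂ) else 0 := by
  rw [← (pairEquiv M N).sum_comp (fun r' => FkronI M N r' w)]
  rw [Fintype.sum_prod_type]
  have hterm : ∀ (a : Fin M) (b : Fin N),
      FkronI M N (pairEquiv M N (a,b)) w
        = if (a:ℕ) = (w:ℕ) % M then dftEntry N b ((w:ℕ)/M) else 0 := by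
    intro a b
    simp only [FkronI, Matrix.of_apply]
    rw [pairEquiv_mod, pairEquiv_div]
  simp only [hterm]
  rw [Finset.sum_eq_single (⟨(w:ℕ) % M, Nat.mod_lt _ hM⟩ : Fin M)]
  · rw [Finset.sum_congr rfl (fun x _ => if_pos rfl)]
    rw [dft_colsum N hN ((w:ℕ)/M) (Nat.div_lt_of_lt_mul (by have := w.isLt; omega))]
    have hiff : (w:ℕ)/M = 0 ↔ (w:ℕ) < M := by rw [Nat.div_eq_zero_iff]; omega
    by_cases h : (w:ℕ) < M
    · rw [if_pos (hiff.mpr h), if_pos h]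
    · rw [if_neg (fun hc => h (hiff.mp hc)), if_neg h]
  · intro a _ ha
    exact Finset.sum_eq_zero fun x _ => if_neg (fun hc => ha (Fin.val_injective hc))
  · intro h; exact absurd (Finset.mem_univ _) h

lemma FkronI_unitary (M N : ℕ) (hM : 0 < M) (hN : 0 < N) :
    (FkronI M N)ᴴ * FkronI M N = 1 := by
  ext v' v
  simp only [Matrix.mul_apply, Matrix.conjTranspose_apply, Matrix.one_apply]
  rw [← (pairEquiv M N).sum_comp (fun c => star (FkronI M N c v') * FkronI M N c v)]
  rw [Fintype.sum_prod_type]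
  have hterm : ∀ (a : Fin M) (b : Fin N),
      star (FkronI M N (pairEquiv M N (a,b)) v') * FkronI M N (pairEquiv M N (a,b)) v
        = if ((a:ℕ) = (v':ℕ) % M ∧ (a:ℕ) = (v:ℕ) % M) then
            dftEntry N b ((v:ℕ)/M) * (starRingEnd ℂ) (dftEntry N b ((v':ℕ)/M)) else 0 := by
    intro a b
    simp only [FkronI, Matrix.of_apply, pairEquiv_mod, pairEquiv_div]
    by_cases h1 : (a:ℕ) = (v':ℕ) % M
    · by_cases h2 : (a:ℕ) = (v:ℕ) % M
      · rw [if_pos h1, if_pos h2, if_pos ⟨h1, h2⟩, Complex.star_def, mul_comm]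
      · rw [if_neg h2, mul_zero, if_neg (by tauto)]
    · rw [if_neg h1, star_zero, zero_mul, if_neg (by tauto)]
  simp only [hterm]
  by_cases hmod : (v':ℕ) % M = (v:ℕ) % M
  · rw [Finset.sum_eq_single (⟨(v:ℕ) % M, Nat.mod_lt _ hM⟩ : Fin M)]
    · have hc : (((⟨(v:ℕ) % M, Nat.mod_lt _ hM⟩ : Fin M)):ℕ) = (v':ℕ) % M ∧
          (((⟨(v:ℕ) % M, Nat.mod_lt _ hM⟩ : Fin M)):ℕ) = (v:ℕ) % M := ⟨hmod.symm, rfl⟩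
      rw [Finset.sum_congr rfl (fun x _ => if_pos hc)]
      rw [dft_ortho N hN ((v:ℕ)/M) ((v':ℕ)/M)
        (Nat.div_lt_of_lt_mul (by have := v.isLt; omega))
        (Nat.div_lt_of_lt_mul (by have := v'.isLt; omega))]
      have hiff : (v:ℕ)/M = (v':ℕ)/M ↔ v' = v := by
        constructor
        · intro h
          ext
          rw [← Nat.div_add_mod ((v':Fin (M*N)):ℕ) M, ← Nat.div_add_mod ((v:Fin (M*N)):ℕ) M, ← h, hmod]
        · intro h; rw [h]
      by_cases h : (v:ℕ)/M = (v':ℕ)/M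
      · rw [if_pos h, if_pos (hiff.mp h)]
      · rw [if_neg h, if_neg (fun hc => h (hiff.mpr hc))]
    · intro a _ ha
      exact Finset.sum_eq_zero fun x _ => if_neg (by rintro ⟨h1, h2⟩; exact ha (Fin.val_injective h2))
    · intro h; exact absurd (Finset.mem_univ _) h
  · rw [Finset.sum_eq_zero, if_neg (by intro h; rw [h] at hmod; exact hmod rfl)]
    intro a _
    exact Finset.sum_eq_zero fun x _ => if_neg (by rintro ⟨h1, h2⟩; exact hmod (by omega))

lemma shift_eq_iff (K ℓ : ℕ) (hK : 0 < K) (hℓ : ℓ ≤ K) (x w : ℕ) (hw : w < K) :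
    (x + (K - ℓ)) % K = w ↔ (w + ℓ) % K = x % K := by
  constructor
  · rintro rfl
    rw [Nat.mod_add_mod]
    have h : x + (K - ℓ) + ℓ = x + K := by omega
    rw [h, Nat.add_mod_right]
  · intro h
    have h1 : (x + (K - ℓ)) % K = (x % K + (K - ℓ)) % K := by
      rw [Nat.mod_add_mod]
    rw [h1, ← h, Nat.mod_add_mod]
    have h2 : w + ℓ + (K - ℓ) = w + K := by omega
    rw [h2, Nat.add_mod_right, Nat.mod_eq_of_lt hw]

lemma cyclicShift_pow (K : ℕ) (hK : 0 < K) (ℓ : ℕ) :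
    (cyclicShift K)^ℓ = Matrix.of fun (u v : Fin K) => if ((v:ℕ) + ℓ) % K = (u:ℕ) then 1 else 0 := by
  induction ℓ with
  | zero =>
    ext u v
    simp only [pow_zero, Matrix.one_apply, Matrix.of_apply, Nat.add_zero]
    simp only [Nat.mod_eq_of_lt v.isLt]
    by_cases h : u = v
    · rw [if_pos h, if_pos (by rw [h])]
    · rw [if_neg h, if_neg (fun hc => h (Fin.val_injective hc.symm))]
  | succ n ih =>
    ext u v
    rw [pow_succ, ih]
    simp only [Matrix.mul_apply, Matrix.of_apply, cyclicShift]
    rw [Finset.sum_eq_single (⟨((v:ℕ)+1) % K, Nat.mod_lt _ hK⟩ : Fin K)]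
    · rw [if_pos rfl, mul_one]
      have h : (((v:ℕ)+1) % K + n) % K = ((v:ℕ) + (n+1)) % K := by
        rw [Nat.mod_add_mod]
        congr 1
        omega
      rw [h]
    · intro t _ ht
      rw [if_neg (show ¬(((v:ℕ)+1)%K = (t:ℕ)) from fun hc => ht (Fin.val_injective hc.symm)), mul_zero]
    · intro h; exact absurd (Finset.mem_univ _) h

lemma B_apply (K : ℕ) (hK : 0 < K) (ℓi ℓj : ℕ) (hℓi : ℓi ≤ K) (hℓj : ℓj ≤ K)
    (si sj : ℝ) (u w : Fin K) :
    ((cyclicShift K)^ℓi * deltaPow K si * (deltaPow K sj)ᴴ * ((cyclicShift K)^ℓj)ᴴ) u w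
      = if ((w:ℕ) + ℓi) % K = ((u:ℕ) + ℓj) % K then
          (Complex.exp (2 * Real.pi * Complex.I * (si : ℂ) * ((((u:ℕ) + (K - ℓi)) % K : ℕ) : ℂ) / (K : ℂ)) *
           star (Complex.exp (2 * Real.pi * Complex.I * (sj : ℂ) * ((((u:ℕ) + (K - ℓi)) % K : ℕ) : ℂ) / (K : ℂ))))
        else 0 := by
  set g : Fin K → ℂ := fun j =>
    Complex.exp (2 * Real.pi * Complex.I * (si : ℂ) * ((j : ℕ) : ℂ) / (K : ℂ)) *
      star (Complex.exp (2 * Real.pi * Complex.I * (sj : ℂ) * ((j : ℕ) : ℂ) / (K : ℂ))) with hg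
  have hdiagH : (deltaPow K sj)ᴴ = Matrix.diagonal
      (fun j : Fin K => star (Complex.exp (2 * Real.pi * Complex.I * (sj : ℂ) * ((j : ℕ) : ℂ) / (K : ℂ)))) := by
    rw [deltaPow, Matrix.diagonal_conjTranspose]
    rfl
  have hBm : (cyclicShift K)^ℓi * deltaPow K si * (deltaPow K sj)ᴴ * ((cyclicShift K)^ℓj)ᴴ
      = (cyclicShift K)^ℓi * Matrix.diagonal g * ((cyclicShift K)^ℓj)ᴴ := by
    rw [hdiagH, deltaPow, Matrix.mul_assoc ((cyclicShift K)^ℓi), Matrix.diagonal_mul_diagonal]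
  have hPiD : (cyclicShift K)^ℓi * Matrix.diagonal g
      = Matrix.of (fun (a b : Fin K) => if ((b:ℕ)+ℓi)%K = (a:ℕ) then g b else 0) := by
    ext a b
    rw [Matrix.mul_diagonal, cyclicShift_pow K hK]
    simp only [Matrix.of_apply]
    by_cases h : ((b:ℕ)+ℓi)%K = (a:ℕ)
    · rw [if_pos h, if_pos h, one_mul]
    · rw [if_neg h, if_neg h, zero_mul]
  rw [hBm, hPiD]
  simp only [Matrix.mul_apply, Matrix.conjTranspose_apply,
    cyclicShift_pow K hK, Matrix.of_apply]
  set v₀ : Fin K := ⟨((u:ℕ) + (K - ℓi)) % K, Nat.mod_lt _ hK⟩ with hv₀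
  rw [Finset.sum_eq_single v₀]
  · have hPi : (((v₀:ℕ) + ℓi) % K) = (u:ℕ) := by
      have := (shift_eq_iff K ℓi hK hℓi (u:ℕ) (v₀:ℕ) v₀.isLt).mp rfl
      rw [this, Nat.mod_eq_of_lt u.isLt]
    rw [if_pos hPi]
    have hcond : ((v₀:ℕ) + ℓj) % K = (w:ℕ) ↔ ((w:ℕ) + ℓi) % K = ((u:ℕ) + ℓj) % K := by
      have h1 : ((v₀:ℕ) + ℓj) % K = ((u:ℕ) + ℓj + (K - ℓi)) % K := by
        show (((u:ℕ) + (K - ℓi)) % K + ℓj) % K = _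
        rw [Nat.mod_add_mod]
        congr 1
        omega
      rw [h1]
      exact shift_eq_iff K ℓi hK hℓi ((u:ℕ) + ℓj) (w:ℕ) w.isLt
    by_cases h : ((w:ℕ) + ℓi) % K = ((u:ℕ) + ℓj) % K
    · rw [if_pos (hcond.mpr h), if_pos h, star_one, mul_one]
    · rw [if_neg (fun hc => h (hcond.mp hc)), if_neg h, star_zero, mul_zero]
  · intro t _ ht
    rw [if_neg, zero_mul]
    intro hc
    apply ht
    apply Fin.val_injective
    have := (shift_eq_iff K ℓi hK hℓi (u:ℕ) (t:ℕ) t.isLt).mpr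
      (by rw [hc, Nat.mod_eq_of_lt u.isLt])
    rw [← this]
  · intro h; exact absurd (Finset.mem_univ _) h

lemma abs_exp_unit (s : ℝ) (v K : ℕ) :
    ‖Complex.exp (2 * Real.pi * Complex.I * (s : ℂ) * ((v : ℕ) : ℂ) / (K : ℂ))‖ = 1 := by
  have h : 2 * Real.pi * Complex.I * (s : ℂ) * ((v : ℕ) : ℂ) / (K : ℂ)
      = ((2 * Real.pi * s * v / K : ℝ) : ℂ) * Complex.I := by
    push_cast
    ring
  rw [h, Complex.norm_exp_ofReal_mul_I]

lemma abs_dftEntry (N a b : ℕ) : ‖dftEntry N a b‖ = (Real.sqrt N)⁻¹ := by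
  unfold dftEntry
  rw [norm_mul]
  have h : -(2 * Real.pi * Complex.I) * (a : ℂ) * (b : ℂ) / (N : ℂ)
      = ((-(2 * Real.pi * a * b / N) : ℝ) : ℂ) * Complex.I := by
    push_cast
    ring
  rw [h, Complex.norm_exp_ofReal_mul_I, mul_one, Complex.norm_real, Real.norm_eq_abs,
    _root_.abs_of_nonneg (by positivity)]

/-- **Lemma 3.** For any two delay–Doppler matrices `Tᵢ = T(ℓᵢ,sᵢ)` and `Tⱼ = T(ℓⱼ,sⱼ)`
(with delay indices in `{0,…,M-1}` and Doppler exponents `s = k + κ`,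
`k ∈ {0,…,N-1}`, `κ ∈ (-1/2,1/2)`) and every row index `r`, the squared modulus of
the full row sum of `Tᵢ·Tⱼ^†` equals one. -/
theorem abs_rowSum_Tmat_mul_conjTranspose_eq_one (M N : ℕ) (hM : 0 < M) (hN : 0 < N)
    (ℓi ℓj ki kj : ℕ) (hℓi : ℓi < M) (hℓj : ℓj < M) (hki : ki < N) (hkj : kj < N)
    (κi κj : ℝ) (hκi₁ : -(1/2) < κi) (hκi₂ : κi < 1/2) (hκj₁ : -(1/2) < κj) (hκj₂ : κj < 1/2) :
    ∀ r : Fin (M * N),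
      ‖(∑ r' : Fin (M * N),
        (Tmat M N ℓi ((ki : ℝ) + κi) * (Tmat M N ℓj ((kj : ℝ) + κj))ᴴ) r r')‖ ^ 2 = 1 := by
  have hK0 : 0 < M * N := Nat.mul_pos hM hN
  have hMK : M ≤ M * N := Nat.le_mul_of_pos_right M hN
  have hMdvd : M ∣ M * N := dvd_mul_right M N
  have hℓiK : ℓi ≤ M * N := le_of_lt (lt_of_lt_of_le hℓi hMK)
  have hℓjK : ℓj ≤ M * N := le_of_lt (lt_of_lt_of_le hℓj hMK)
  set K := M * N with hKdef
  set si : ℝ := (ki : ℝ) + κi with hsi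
  set sj : ℝ := (kj : ℝ) + κj with hsj
  set A := FkronI M N with hAdef
  have hAA : Aᴴ * A = 1 := FkronI_unitary M N hM hN
  have hcancel : ∀ X : Matrix (Fin K) (Fin K) ℂ, Aᴴ * (A * X) = X := fun X => by
    rw [← Matrix.mul_assoc, hAA, Matrix.one_mul]
  set Bm := (cyclicShift K)^ℓi * deltaPow K si * (deltaPow K sj)ᴴ * ((cyclicShift K)^ℓj)ᴴ with hBmdef
  have hprod : Tmat M N ℓi si * (Tmat M N ℓj sj)ᴴ = A * Bm * Aᴴ := by
    simp only [Tmat, hBmdef, ← hAdef, ← hKdef, Matrix.conjTranspose_mul,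
      Matrix.conjTranspose_conjTranspose, Matrix.mul_assoc, hcancel]
    rfl
  intro r
  rw [hprod]
  -- Step 1: collapse the row sum via column sums of A
  have hS1 : ∑ r' : Fin K, (A * Bm * Aᴴ) r r'
      = ∑ w : Fin K, (A * Bm) r w * (if (w:ℕ) < M then ((Real.sqrt N : ℝ) : ℂ) else 0) := by
    calc ∑ r' : Fin K, (A * Bm * Aᴴ) r r'
        = ∑ r' : Fin K, ∑ w : Fin K, (A * Bm) r w * star (A r' w) := by
          simp only [Matrix.mul_apply, Matrix.conjTranspose_apply]
      _ = ∑ w : Fin K, ∑ r' : Fin K, (A * Bm) r w * star (A r' w) := Finset.sum_comm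
      _ = ∑ w : Fin K, (A * Bm) r w * star (∑ r' : Fin K, A r' w) := by
          refine Finset.sum_congr rfl fun w _ => ?_
          rw [star_sum, Finset.mul_sum]
      _ = _ := by
          refine Finset.sum_congr rfl fun w _ => ?_
          rw [hAdef, FkronI_colsum M N hM hN w]
          by_cases h : (w:ℕ) < M
          · rw [if_pos h, Complex.star_def, Complex.conj_ofReal]
          · rw [if_neg h, star_zero]
  -- Step 2: the entries of A * Bm
  have hABm : ∀ w : Fin K, (A * Bm) r w
      = A r ⟨((w:ℕ) + ℓi + (K - ℓj)) % K, Nat.mod_lt _ hK0⟩ *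
        (Complex.exp (2 * Real.pi * Complex.I * (si:ℂ) *
            (((((w:ℕ) + ℓi + (K - ℓj)) % K + (K - ℓi)) % K : ℕ) : ℂ) / (K:ℂ)) *
         star (Complex.exp (2 * Real.pi * Complex.I * (sj:ℂ) *
            (((((w:ℕ) + ℓi + (K - ℓj)) % K + (K - ℓi)) % K : ℕ) : ℂ) / (K:ℂ)))) := by
    intro w
    rw [Matrix.mul_apply]
    simp only [hBmdef]
    simp only [B_apply K hK0 ℓi ℓj hℓiK hℓjK si sj]
    rw [Finset.sum_eq_single (⟨((w:ℕ) + ℓi + (K - ℓj)) % K, Nat.mod_lt _ hK0⟩ : Fin K)]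
    · rw [if_pos]
      show ((w:ℕ) + ℓi) % K = (((w:ℕ) + ℓi + (K - ℓj)) % K + ℓj) % K
      rw [Nat.mod_add_mod]
      have h2 : (w:ℕ) + ℓi + (K - ℓj) + ℓj = (w:ℕ) + ℓi + K := by omega
      rw [h2, Nat.add_mod_right]
    · intro u _ hu
      rw [if_neg, mul_zero]
      intro hc
      exact hu (Fin.val_injective
        ((shift_eq_iff K ℓj hK0 hℓjK ((w:ℕ)+ℓi) (u:ℕ) u.isLt).mpr hc.symm).symm)
    · intro h; exact absurd (Finset.mem_univ _) h
  -- the distinguished column index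
  set cM : ℕ := (ℓi + (K - ℓj)) % M with hcM
  have hcMlt : cM < M := Nat.mod_lt _ hM
  have hcMle : cM ≤ M := le_of_lt hcMlt
  set w₀val : ℕ := ((r:ℕ) + (M - cM)) % M with hw₀val
  have hw₀lt : w₀val < M := Nat.mod_lt _ hM
  set w₀ : Fin K := ⟨w₀val, lt_of_lt_of_le hw₀lt hMK⟩ with hw₀
  -- mod-M value of the distinguished row index
  have hu₀modM : ∀ w : Fin K, (((w:ℕ)+ℓi+(K-ℓj))%K)%M = ((w:ℕ)%M + cM)%M := by
    intro w
    rw [Nat.mod_mod_of_dvd _ hMdvd, Nat.add_assoc, Nat.add_mod, hcM]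
  have hkey : ∀ w : Fin K, (w:ℕ) < M →
      ((r:ℕ)%M = (((w:ℕ)+ℓi+(K-ℓj))%K)%M ↔ (w:ℕ) = w₀val) := by
    intro w hw
    rw [hu₀modM w, Nat.mod_eq_of_lt hw]
    constructor
    · intro h
      have := (shift_eq_iff M cM hM hcMle (r:ℕ) (w:ℕ) hw).mpr h.symm
      rw [← hw₀val] at this
      exact this.symm
    · intro h
      rw [h]
      have := (shift_eq_iff M cM hM hcMle (r:ℕ) w₀val hw₀lt).mp hw₀val.symm
      exact this.symm
  -- Step 3: only the w₀ term survives
  set u₀ : Fin K := ⟨((w₀:ℕ) + ℓi + (K - ℓj)) % K, Nat.mod_lt _ hK0⟩ with hu₀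
  set e₀ : ℂ := Complex.exp (2 * Real.pi * Complex.I * (si:ℂ) *
        (((((w₀:ℕ) + ℓi + (K - ℓj)) % K + (K - ℓi)) % K : ℕ) : ℂ) / (K:ℂ)) *
      star (Complex.exp (2 * Real.pi * Complex.I * (sj:ℂ) *
        (((((w₀:ℕ) + ℓi + (K - ℓj)) % K + (K - ℓi)) % K : ℕ) : ℂ) / (K:ℂ))) with he₀
  have hS2 : ∑ w : Fin K, (A * Bm) r w * (if (w:ℕ) < M then ((Real.sqrt N : ℝ) : ℂ) else 0)
      = A r u₀ * e₀ * ((Real.sqrt N : ℝ) : ℂ) := by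
    rw [Finset.sum_eq_single w₀]
    · rw [hABm w₀, if_pos (show ((w₀:Fin K):ℕ) < M from hw₀lt), hu₀, he₀]
    · intro w _ hw
      by_cases hwM : (w:ℕ) < M
      · rw [hABm w, if_pos hwM]
        have hA0 : A r ⟨((w:ℕ) + ℓi + (K - ℓj)) % K, Nat.mod_lt _ hK0⟩ = 0 := by
          rw [hAdef]
          show (if (r:ℕ) % M = (((w:ℕ)+ℓi+(K-ℓj))%K) % M then _ else 0) = 0
          rw [if_neg]
          intro hcnd
          exact hw (Fin.val_injective ((hkey w hwM).mp hcnd))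
        rw [hA0, zero_mul, zero_mul]
      · rw [if_neg hwM, mul_zero]
    · intro h; exact absurd (Finset.mem_univ _) h
  rw [hS1, hS2]
  -- Step 4: evaluate the absolute value
  have hArval : A r u₀ = dftEntry N ((r:ℕ)/M) ((u₀:ℕ)/M) := by
    rw [hAdef]
    show (if (r:ℕ) % M = ((u₀:Fin K):ℕ) % M then _ else 0) = _
    rw [if_pos ((hkey w₀ hw₀lt).mpr rfl)]
  have hsN : Real.sqrt N ≠ 0 := by
    refine Real.sqrt_ne_zero'.mpr ?_
    exact_mod_cast hN
  rw [hArval, norm_mul, norm_mul, abs_dftEntry, Complex.norm_real, Real.norm_eq_abs,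
    _root_.abs_of_nonneg (Real.sqrt_nonneg _)]
  have he₀abs : ‖e₀‖ = 1 := by
    rw [he₀, norm_mul, abs_exp_unit, Complex.star_def, Complex.norm_conj, abs_exp_unit, one_mul]
  rw [he₀abs, mul_one]
  rw [inv_mul_cancel₀ hsN]
  norm_num

end
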